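/- Let X be a compact metrizable space and let E ⊆ X be an analytic subspace. Equip F(X) with the Vietoris topology. Then the map A ↦ cl_X(A) (closure in X) from F(E) to F(X) is injective, is measurable from 𝓑_{F(E)} to the Borel σ-algebra of F(X), its image {cl_X(A) : A ∈ F(E)} is an analytic subset of F(X), and it maps every Souslin set in (F(E), 𝓑_{F(E)}) onto an analytic subset of F(X). -/

import Mathlib

open Set Topology TopologicalSpace MeasureTheory

/-- The Effros Borel structure on the collection of closed subsets of `X`. -/
def effrosSigma (X : Type*) [TopologicalSpace X] :
    MeasurableSpace {A : Set X // IsClosed A} :=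
  MeasurableSpace.generateFrom
    {𝓤 : Set {A : Set X // IsClosed A} |
      ∃ U : Set X, IsOpen U ∧ 𝓤 = {A : {A : Set X // IsClosed A} | ((A : Set X) ∩ U).Nonempty}}

/-- `𝓐` is the result of the Souslin operation applied to `m`-measurable sets. -/
def IsSouslinIn {α : Type*} (m : MeasurableSpace α) (𝓐 : Set α) : Prop :=
  ∃ f : List ℕ → Set α, (∀ s, MeasurableSet[m] (f s)) ∧
    𝓐 = ⋃ σ : ℕ → ℕ, ⋂ n : ℕ, f (List.ofFn fun i : Fin n => σ i)

/-- dim X ≤ 0 : `X` has a base consisting of clopen sets (or is empty). -/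
def ZeroDimensional (X : Type*) [TopologicalSpace X] : Prop :=
  ∃ B : Set (Set X), (∀ s ∈ B, IsClopen s) ∧ IsTopologicalBasis B

/-- Every point of `S` is isolated in the subspace `S`. -/
def RelativelyDiscrete {E : Type*} [TopologicalSpace E] (S : Set E) : Prop :=
  ∀ x ∈ S, ∃ U : Set E, IsOpen U ∧ U ∩ S = {x}

/-- countable union of zero-dimensional subspaces -/
def CountableDimensional (X : Type*) [TopologicalSpace X] : Prop :=
  ∃ C : ℕ → Set X, (⋃ n, C n) = univ ∧ ∀ n, ZeroDimensional (C n)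

/-- F₀(X): nonempty zero-dimensional closed sets -/
def zeroDimClosedSets (X : Type*) [TopologicalSpace X] :
    Set {A : Set X // IsClosed A} :=
  {A | (A : Set X).Nonempty ∧ ZeroDimensional (A : Set X)}

/-- The Vietoris topology on the collection of closed subsets of `X`. -/
def vietoris (X : Type*) [TopologicalSpace X] :
    TopologicalSpace {A : Set X // IsClosed A} :=
  TopologicalSpace.generateFrom
    ({𝓤 | ∃ U : Set X, IsOpen U ∧ 𝓤 = {A : {A : Set X // IsClosed A} | (A : Set X) ⊆ U}} ∪
     {𝓤 | ∃ U : Set X, IsOpen U ∧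
        𝓤 = {A : {A : Set X // IsClosed A} | ((A : Set X) ∩ U).Nonempty}})

/-- The Wijsman topology on nonempty closed subsets of a metric space. -/
noncomputable def wijsman (E : Type*) [MetricSpace E] :
    TopologicalSpace {A : Set E // IsClosed A ∧ A.Nonempty} :=
  ⨅ z : E, TopologicalSpace.induced (fun A => Metric.infDist z (A : Set E)) inferInstance

/-- The map `A ↦ cl_X(A)` from closed subsets of `E ⊆ X` to closed subsets of `X`. -/
noncomputable def closureMap {X : Type*} [TopologicalSpace X] (E : Set X)
    (A : {A : Set E // IsClosed A}) : {A : Set X // IsClosed A} :=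
  ⟨closure (Subtype.val '' (A : Set E)), isClosed_closure⟩

section AuxiliaryLemmas

theorem alexander_subbase {α : Type*} {S : Set (Set α)}
    (h : ∀ C ⊆ S, ⋃₀ C = univ → ∃ T ⊆ C, T.Finite ∧ ⋃₀ T = univ) :
    @CompactSpace α (.generateFrom S) := by
  letI t : TopologicalSpace α := .generateFrom S
  constructor
  rw [isCompact_iff_ultrafilter_le_nhds]
  intro F _
  by_contra hF
  push_neg at hF
  have key : ∀ x : α, ∃ s, s ∈ S ∧ x ∈ s ∧ s ∉ F := by
    intro x
    have hx := hF x (mem_univ x)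
    rw [nhds_generateFrom, le_iInf₂_iff] at hx
    push_neg at hx
    obtain ⟨s, ⟨hxs, hsS⟩, hFs⟩ := hx
    exact ⟨s, hsS, hxs, fun hm => hFs (Filter.le_principal_iff.2 hm)⟩
  have hcov : ⋃₀ {s | s ∈ S ∧ s ∉ F} = univ := by
    refine eq_univ_of_forall fun x => ?_
    obtain ⟨s, h1, h2, h3⟩ := key x
    exact ⟨s, ⟨h1, h3⟩, h2⟩
  obtain ⟨T, hTC, hTfin, hTcov⟩ := h _ (fun s hs => hs.1) hcov
  have hInter : ⋂ s ∈ T, sᶜ ∈ F :=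
    (Filter.biInter_mem hTfin).2 fun s hs => Ultrafilter.compl_mem_iff_notMem.2 (hTC hs).2
  have : (⋂ s ∈ T, sᶜ) = (∅ : Set α) := by
    ext x
    simp only [mem_iInter, mem_compl_iff, mem_empty_iff_false, iff_false, not_forall, not_not]
    obtain ⟨s, hsT, hxs⟩ : x ∈ ⋃₀ T := hTcov ▸ mem_univ x
    exact ⟨s, hsT, hxs⟩
  rw [this] at hInter
  exact Filter.empty_notMem (F : Filter α) hInter

def hitSet {X : Type*} [TopologicalSpace X] (U : Set X) : Set {A : Set X // IsClosed A} :=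
  {A | ((A : Set X) ∩ U).Nonempty}

def subSet {X : Type*} [TopologicalSpace X] (U : Set X) : Set {A : Set X // IsClosed A} :=
  {A | (A : Set X) ⊆ U}

theorem isOpen_hitSet {X : Type*} [TopologicalSpace X] {U : Set X} (hU : IsOpen U) :
    IsOpen[vietoris X] (hitSet U) :=
  isOpen_generateFrom_of_mem (Or.inr ⟨U, hU, rfl⟩)

theorem isOpen_subSet {X : Type*} [TopologicalSpace X] {U : Set X} (hU : IsOpen U) :
    IsOpen[vietoris X] (subSet U) :=
  isOpen_generateFrom_of_mem (Or.inl ⟨U, hU, rfl⟩)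

theorem isOpen_generateFrom_biUnion {α : Type*} {ι : Type*} {g : Set (Set α)} {s : Set ι}
    {f : ι → Set α} (h : ∀ i ∈ s, IsOpen[TopologicalSpace.generateFrom g] (f i)) :
    IsOpen[TopologicalSpace.generateFrom g] (⋃ i ∈ s, f i) := by
  letI := TopologicalSpace.generateFrom g
  exact isOpen_biUnion h

theorem secondCountable_generateFrom {α : Type*} {g : Set (Set α)} (h : g.Countable) :
    @SecondCountableTopology α (.generateFrom g) := by
  letI := TopologicalSpace.generateFrom g
  exact (isTopologicalBasis_of_subbasis rfl).secondCountableTopology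
    ((countable_setOf_finite_subset h).image _)

theorem vietoris_t2 (X : Type*) [MetricSpace X] :
    @T2Space {A : Set X // IsClosed A} (vietoris X) := by
  letI := vietoris X
  have key : ∀ A B : {A : Set X // IsClosed A}, ∀ x : X, x ∈ (A : Set X) → x ∉ (B : Set X) →
      ∃ u v : Set {A : Set X // IsClosed A},
        IsOpen u ∧ IsOpen v ∧ A ∈ u ∧ B ∈ v ∧ Disjoint u v := by
    intro A B x hxA hxB
    obtain ⟨r, hr, hball⟩ := Metric.isOpen_iff.1 B.2.isOpen_compl x hxB
    refine ⟨hitSet (Metric.ball x (r / 2)), subSet (Metric.closedBall x (r / 2))ᶜ,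
      isOpen_hitSet Metric.isOpen_ball, isOpen_subSet Metric.isClosed_closedBall.isOpen_compl,
      ⟨x, hxA, Metric.mem_ball_self (by positivity)⟩, ?_, ?_⟩
    · intro y hyB
      simp only [mem_compl_iff, Metric.mem_closedBall, not_le]
      by_contra hd
      push_neg at hd
      exact hball (show y ∈ Metric.ball x r from by
        simp only [Metric.mem_ball]; linarith) hyB
    · rw [Set.disjoint_left]
      rintro K ⟨y, hyK, hyb⟩ hKsub
      exact hKsub hyK (Metric.ball_subset_closedBall hyb)
  constructor
  intro A B hAB
  have hne : (A : Set X) ≠ (B : Set X) := fun h => hAB (Subtype.ext h)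
  rcases not_and_or.1 fun h : (A:Set X) ⊆ (B:Set X) ∧ (B:Set X) ⊆ (A:Set X) =>
      hne (Subset.antisymm h.1 h.2) with h | h
  · obtain ⟨x, hxA, hxB⟩ := not_subset.1 h
    exact key A B x hxA hxB
  · obtain ⟨x, hxB, hxA⟩ := not_subset.1 h
    obtain ⟨u, v, hu, hv, hBu, hAv, hd⟩ := key B A x hxB hxA
    exact ⟨v, u, hv, hu, hAv, hBu, hd.symm⟩

theorem vietoris_secondCountable (X : Type*) [MetricSpace X] [CompactSpace X] :
    @SecondCountableTopology {A : Set X // IsClosed A} (vietoris X) := by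
  set b := countableBasis X with hb
  set S₀ : Set (Set {A : Set X // IsClosed A}) :=
    (fun F : Set (Set X) => subSet (⋃₀ F)) '' {F | F.Finite ∧ F ⊆ b} ∪ hitSet '' b with hS₀
  have hcount : S₀.Countable :=
    ((countable_setOf_finite_subset (countable_countableBasis X)).image _).union
      ((countable_countableBasis X).image _)
  have heq : vietoris X = .generateFrom S₀ := by
    refine le_antisymm ?_ ?_
    · rw [le_generateFrom_iff_subset_isOpen]
      rintro s (⟨F, ⟨hFfin, hFb⟩, rfl⟩ | ⟨V, hVb, rfl⟩)
      · exact isOpen_subSet (isOpen_sUnion fun V hV =>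
          isOpen_of_mem_countableBasis (hFb hV))
      · exact isOpen_hitSet (isOpen_of_mem_countableBasis hVb)
    · rw [show vietoris X = .generateFrom _ from rfl, le_generateFrom_iff_subset_isOpen]
      rintro s (⟨U, hU, rfl⟩ | ⟨U, hU, rfl⟩)
      · -- subSet U
        have : {A : {A : Set X // IsClosed A} | (A : Set X) ⊆ U} =
            ⋃ F ∈ {F : Set (Set X) | F.Finite ∧ F ⊆ b ∧ ⋃₀ F ⊆ U}, subSet (⋃₀ F) := by
          ext A
          simp only [mem_setOf_eq, mem_iUnion, subSet]
          constructor
          · intro hAU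
            have hAcpt : IsCompact (A : Set X) := A.2.isCompact
            have hcover : (A : Set X) ⊆ ⋃ V ∈ {V | V ∈ b ∧ V ⊆ U}, V := by
              intro x hx
              obtain ⟨V, hVb, hxV, hVU⟩ :=
                (isBasis_countableBasis X).exists_subset_of_mem_open (hAU hx) hU
              exact mem_iUnion₂.2 ⟨V, ⟨hVb, hVU⟩, hxV⟩
            obtain ⟨b', hb'sub, hb'fin, hb'cov⟩ :=
              hAcpt.elim_finite_subcover_image (b := {V | V ∈ b ∧ V ⊆ U}) (c := fun V => V)
                (fun V hV => isOpen_of_mem_countableBasis hV.1) hcover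
            refine ⟨b', ⟨hb'fin, fun V hV => (hb'sub hV).1, ?_⟩, ?_⟩
            · exact sUnion_subset fun V hV => (hb'sub hV).2
            · rwa [← sUnion_eq_biUnion] at hb'cov
          · rintro ⟨F, ⟨hFfin, hFb, hFU⟩, hAF⟩
            exact hAF.trans hFU
        rw [this]
        exact isOpen_generateFrom_biUnion fun F hF =>
          isOpen_generateFrom_of_mem (Or.inl ⟨F, ⟨hF.1, hF.2.1⟩, rfl⟩)
      · -- hitSet U
        have : {A : {A : Set X // IsClosed A} | ((A : Set X) ∩ U).Nonempty} =
            ⋃ V ∈ {V | V ∈ b ∧ V ⊆ U}, hitSet V := by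
          ext A
          simp only [mem_setOf_eq, mem_iUnion, hitSet]
          constructor
          · rintro ⟨x, hxA, hxU⟩
            obtain ⟨V, hVb, hxV, hVU⟩ :=
              (isBasis_countableBasis X).exists_subset_of_mem_open hxU hU
            exact ⟨V, ⟨hVb, hVU⟩, ⟨x, hxA, hxV⟩⟩
          · rintro ⟨V, ⟨hVb, hVU⟩, x, hxA, hxV⟩
            exact ⟨x, hxA, hVU hxV⟩
        rw [this]
        exact isOpen_generateFrom_biUnion fun V hV =>
          isOpen_generateFrom_of_mem (Or.inr ⟨V, hV.1, rfl⟩)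
  rw [heq]
  exact secondCountable_generateFrom hcount

theorem vietoris_compactSpace (X : Type*) [TopologicalSpace X] [CompactSpace X] :
    @CompactSpace {A : Set X // IsClosed A} (vietoris X) := by
  apply alexander_subbase
  intro C hC hcov
  set 𝒱 : Set (Set X) := {V | IsOpen V ∧ hitSet V ∈ C} with h𝒱
  have hWopen : IsOpen (⋃₀ 𝒱) := isOpen_sUnion fun V hV => hV.1
  set A₀ : {A : Set X // IsClosed A} := ⟨(⋃₀ 𝒱)ᶜ, hWopen.isClosed_compl⟩ with hA₀
  obtain ⟨c, hcC, hA₀c⟩ : A₀ ∈ ⋃₀ C := hcov ▸ mem_univ A₀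
  rcases hC hcC with ⟨U₀, hU₀, rfl⟩ | ⟨V, hV, rfl⟩
  · -- c = subSet U₀
    have hsub : U₀ᶜ ⊆ ⋃₀ 𝒱 := by
      intro x hx
      by_contra hx'
      exact hx (hA₀c hx')
    have hcpt : IsCompact (U₀ᶜ) := hU₀.isClosed_compl.isCompact
    obtain ⟨b', hb'sub, hb'fin, hb'cov⟩ :=
      hcpt.elim_finite_subcover_image (b := 𝒱) (c := fun V => V) (fun V hV => hV.1) (by rwa [← sUnion_eq_biUnion])
    refine ⟨insert (subSet U₀) (hitSet '' b'), ?_, (hb'fin.image _).insert _, ?_⟩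
    · rintro s (rfl | ⟨V, hVb', rfl⟩)
      · exact hcC
      · exact (hb'sub hVb').2
    · refine eq_univ_of_forall fun A => ?_
      by_cases hA : (A : Set X) ⊆ U₀
      · exact ⟨subSet U₀, mem_insert _ _, hA⟩
      · obtain ⟨x, hxA, hxU₀⟩ := not_subset.1 hA
        obtain ⟨V, hVb', hxV⟩ := mem_iUnion₂.1 (hb'cov hxU₀)
        exact ⟨hitSet V, mem_insert_of_mem _ ⟨V, hVb', rfl⟩, ⟨x, hxA, hxV⟩⟩
  · -- c = hitSet V : contradiction
    obtain ⟨x, hxA₀, hxV⟩ := hA₀c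
    exact absurd (⟨V, ⟨hV, hcC⟩, hxV⟩ : x ∈ ⋃₀ 𝒱) hxA₀

theorem vietoris_polishSpace (X : Type*) [MetricSpace X] [CompactSpace X] :
    @PolishSpace {A : Set X // IsClosed A} (vietoris X) := by
  letI := vietoris X
  haveI := vietoris_compactSpace X
  haveI := vietoris_t2 X
  haveI := vietoris_secondCountable X
  haveI : MetrizableSpace {A : Set X // IsClosed A} := inferInstance
  letI := TopologicalSpace.metrizableSpaceMetric {A : Set X // IsClosed A}
  infer_instance

theorem isClosed_memRel (X : Type*) [MetricSpace X] :
    @IsClosed (X × {A : Set X // IsClosed A}) (@instTopologicalSpaceProd _ _ _ (vietoris X))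
      {p | p.1 ∈ (p.2 : Set X)} := by
  letI := vietoris X
  rw [← isOpen_compl_iff, isOpen_prod_iff]
  intro x A hxA
  obtain ⟨r, hr, hball⟩ := Metric.isOpen_iff.1 A.2.isOpen_compl x hxA
  refine ⟨Metric.ball x (r / 2), subSet (Metric.closedBall x (r / 2))ᶜ, Metric.isOpen_ball,
    isOpen_subSet Metric.isClosed_closedBall.isOpen_compl, Metric.mem_ball_self (by positivity), ?_, ?_⟩
  · intro y hyA
    simp only [mem_compl_iff, Metric.mem_closedBall, not_le]
    by_contra hd
    push_neg at hd
    exact hball (show y ∈ Metric.ball x r from by simp only [Metric.mem_ball]; linarith) hyA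
  · rintro ⟨y, K⟩ ⟨hy, hK⟩
    intro hyK
    exact hK hyK (Metric.ball_subset_closedBall hy)

theorem analyticSet_hitSet (X : Type*) [MetricSpace X] [CompactSpace X] {T : Set X}
    (hT : AnalyticSet T) : @AnalyticSet _ (vietoris X) (hitSet T) := by
  letI := vietoris X
  haveI := vietoris_polishSpace X
  rcases analyticSet_iff_exists_polishSpace_range.1 hT with ⟨β, tβ, pβ, f, hf, rfl⟩
  have hM : IsClosed {p : β × {A : Set X // IsClosed A} | f p.1 ∈ (p.2 : Set X)} :=
    (isClosed_memRel X).preimage ((hf.comp continuous_fst).prodMk continuous_snd)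
  have himg : hitSet (range f) =
      Prod.snd '' {p : β × {A : Set X // IsClosed A} | f p.1 ∈ (p.2 : Set X)} := by
    ext K
    simp only [hitSet, mem_setOf_eq, mem_image, Prod.exists]
    constructor
    · rintro ⟨x, hxK, σ, rfl⟩
      exact ⟨σ, K, hxK, rfl⟩
    · rintro ⟨σ, K', hσ, rfl⟩
      exact ⟨f σ, hσ, σ, rfl⟩
  rw [himg]
  exact hM.analyticSet.image_of_continuous continuous_snd

theorem MeasureTheory.AnalyticSet.union' {α : Type*} [TopologicalSpace α] {s t : Set α}
    (hs : AnalyticSet s) (ht : AnalyticSet t) : AnalyticSet (s ∪ t) := by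
  rw [Set.union_eq_iUnion]
  exact AnalyticSet.iUnion (fun b => by cases b <;> simpa)

theorem MeasureTheory.AnalyticSet.inter' {α : Type*} [TopologicalSpace α] [T2Space α] {s t : Set α}
    (hs : AnalyticSet s) (ht : AnalyticSet t) : AnalyticSet (s ∩ t) := by
  rw [Set.inter_eq_iInter]
  exact AnalyticSet.iInter (fun b => by cases b <;> simpa)

theorem continuous_prod_discrete {D T Y : Type*} [TopologicalSpace D] [DiscreteTopology D]
    [TopologicalSpace T] [TopologicalSpace Y] {h : D → T → Y} (hc : ∀ d, Continuous (h d)) :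
    Continuous fun q : D × T => h q.1 q.2 := by
  rw [continuous_iff_continuousAt]
  rintro ⟨d, t⟩
  have := (hc d).tendsto t
  simpa [ContinuousAt, nhds_prod_eq, nhds_discrete, Filter.pure_prod,
    Filter.tendsto_map'_iff, Function.comp_def] using this

theorem analyticSet_souslin {Y : Type*} [TopologicalSpace Y] [T2Space Y]
    {B : List ℕ → Set Y} (hB : ∀ s, AnalyticSet (B s)) :
    AnalyticSet (⋃ σ : ℕ → ℕ, ⋂ n : ℕ, B (List.ofFn fun i : Fin n => σ i)) := by
  rcases isEmpty_or_nonempty Y with hY | hY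
  · have : (⋃ σ : ℕ → ℕ, ⋂ n : ℕ, B (List.ofFn fun i : Fin n => σ i)) = ∅ :=
      eq_empty_of_isEmpty _
    rw [this]; exact analyticSet_empty
  have hrep : ∀ s : List ℕ, ∃ h : (ℕ → ℕ) → Y, Continuous h ∧
      ((B s).Nonempty → range h = B s) := by
    intro s
    have := hB s
    rw [AnalyticSet] at this
    rcases this with h | ⟨f, hf, hfr⟩
    · exact ⟨fun _ => Classical.arbitrary Y, continuous_const,
        fun hne => absurd h hne.ne_empty⟩
    · exact ⟨f, hf, fun _ => hfr⟩
  choose h hcont hrange using hrep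
  set S : Set (List ℕ) := {s | (B s).Nonempty} with hS
  set res : (ℕ → ℕ) → ℕ → List ℕ := fun σ n => List.ofFn fun i : Fin n => σ i with hres
  set Z : Set ((ℕ → ℕ) × (ℕ → ℕ → ℕ)) :=
    {p | ∀ n : ℕ, res p.1 n ∈ S ∧ h (res p.1 n) (p.2 n) = h [] (p.2 0)} with hZdef
  have hZ : IsClosed Z := by
    have hZeq : Z = ⋂ n : ℕ,
        ({p : (ℕ → ℕ) × (ℕ → ℕ → ℕ) | res p.1 n ∈ S} ∩
         {p : (ℕ → ℕ) × (ℕ → ℕ → ℕ) | h (res p.1 n) (p.2 n) = h [] (p.2 0)}) := by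
      ext p
      simp only [hZdef, mem_setOf_eq, mem_iInter, mem_inter_iff, forall_and]
    rw [hZeq]
    refine isClosed_iInter fun n => IsClosed.inter ?_ ?_
    · have hc : Continuous fun p : (ℕ → ℕ) × (ℕ → ℕ → ℕ) => (fun i : Fin n => p.1 i) :=
        continuous_pi fun i => (continuous_apply (i : ℕ)).comp continuous_fst
      exact (isClosed_discrete {v : Fin n → ℕ | List.ofFn v ∈ S}).preimage hc
    · have hc1 : Continuous fun p : (ℕ → ℕ) × (ℕ → ℕ → ℕ) => h (res p.1 n) (p.2 n) := by
        have hcu : Continuous fun q : (Fin n → ℕ) × (ℕ → ℕ) => h (List.ofFn q.1) q.2 :=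
          continuous_prod_discrete fun v => hcont (List.ofFn v)
        have hφ : Continuous fun p : (ℕ → ℕ) × (ℕ → ℕ → ℕ) =>
            (((fun i : Fin n => p.1 i) : Fin n → ℕ), p.2 n) :=
          Continuous.prodMk (continuous_pi fun i => (continuous_apply (i : ℕ)).comp continuous_fst)
            ((continuous_apply n).comp continuous_snd)
        exact hcu.comp hφ
      have hc2 : Continuous fun p : (ℕ → ℕ) × (ℕ → ℕ → ℕ) => h [] (p.2 0) :=
        (hcont []).comp ((continuous_apply 0).comp continuous_snd)
      exact isClosed_eq hc1 hc2
  have himg : (⋃ σ : ℕ → ℕ, ⋂ n : ℕ, B (res σ n)) =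
      (fun p : (ℕ → ℕ) × (ℕ → ℕ → ℕ) => h [] (p.2 0)) '' Z := by
    ext y
    constructor
    · intro hy
      rw [mem_iUnion] at hy
      obtain ⟨σ, hy⟩ := hy
      rw [mem_iInter] at hy
      have hne : ∀ n, res σ n ∈ S := fun n => ⟨y, hy n⟩
      have hex : ∀ n, ∃ τ : ℕ → ℕ, h (res σ n) τ = y := by
        intro n
        have hr := hrange _ (hne n)
        have : y ∈ range (h (res σ n)) := hr ▸ hy n
        exact this
      choose τ hτ using hex
      have hres0 : res σ 0 = [] := List.ofFn_zero
      have h0 : h [] (τ 0) = y := by rw [← hres0]; exact hτ 0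
      exact ⟨(σ, τ), fun n => ⟨hne n, by rw [hτ n, h0]⟩, h0⟩
    · rintro ⟨⟨σ, τ⟩, hp, rfl⟩
      rw [mem_iUnion]
      refine ⟨σ, mem_iInter.2 fun n => ?_⟩
      obtain ⟨h1, h2⟩ := hp n
      have h1' : res σ n ∈ S := h1
      have h2' : h (res σ n) (τ n) = h [] (τ 0) := h2
      show h [] (τ 0) ∈ B (res σ n)
      rw [← h2', ← hrange _ h1']
      exact mem_range_self _
  rw [himg]
  haveI : PolishSpace ((ℕ → ℕ) × (ℕ → ℕ → ℕ)) := inferInstance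
  exact hZ.analyticSet.image_of_continuous
    ((hcont []).comp ((continuous_apply 0).comp continuous_snd))

theorem closure_inter_open_nonempty {X : Type*} [TopologicalSpace X] {S U : Set X}
    (hU : IsOpen U) : (closure S ∩ U).Nonempty ↔ (S ∩ U).Nonempty := by
  constructor
  · rintro ⟨x, hxc, hxU⟩
    obtain ⟨y, hyU, hyS⟩ := _root_.mem_closure_iff.1 hxc U hU hxU
    exact ⟨y, hyS, hyU⟩
  · rintro ⟨x, hxS, hxU⟩
    exact ⟨x, subset_closure hxS, hxU⟩

theorem image_iInter_of_injective {α β ι : Type*} [Nonempty ι] {g : α → β}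
    (hg : Function.Injective g) (s : ι → Set α) : g '' (⋂ i, s i) = ⋂ i, g '' s i := by
  apply Subset.antisymm (image_iInter_subset s g)
  intro y hy
  rw [mem_iInter] at hy
  obtain ⟨x, hx, rfl⟩ := hy (Classical.arbitrary ι)
  refine mem_image_of_mem _ (mem_iInter.2 fun i => ?_)
  obtain ⟨x', hx', hxx⟩ := hy i
  rwa [hg hxx] at hx'


end AuxiliaryLemmas

theorem closureMap_injective_measurable_image_analytic
    {X : Type} [TopologicalSpace X] [CompactSpace X] [MetrizableSpace X]
    (E : Set X) (hE : MeasureTheory.AnalyticSet E) :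
    Function.Injective (closureMap E) ∧
    @Measurable _ _ (effrosSigma E) (@borel _ (vietoris X)) (closureMap E) ∧
    @MeasureTheory.AnalyticSet _ (vietoris X) (range (closureMap E)) ∧
    (∀ 𝓐 : Set {A : Set E // IsClosed A}, IsSouslinIn (effrosSigma E) 𝓐 →
      @MeasureTheory.AnalyticSet _ (vietoris X) (closureMap E '' 𝓐)) := by
  letI mX : MetricSpace X := TopologicalSpace.metrizableSpaceMetric X
  -- the closed sets of E are exactly traces of closed sets of X
  have hval : ∀ A : {A : Set E // IsClosed A},
      Subtype.val '' (A : Set E) = closure (Subtype.val '' (A : Set E)) ∩ E := by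
    intro A
    obtain ⟨C, hC, hCA⟩ := isClosed_induced_iff.1 A.2
    apply Subset.antisymm
    · rintro x ⟨y, hy, rfl⟩
      exact ⟨subset_closure ⟨y, hy, rfl⟩, y.2⟩
    · rintro x ⟨hxcl, hxE⟩
      have hsubC : Subtype.val '' (A : Set E) ⊆ C := by
        rintro z ⟨y, hy, rfl⟩
        rw [← hCA] at hy
        exact hy
      have hxC : x ∈ C := by
        have := closure_mono hsubC hxcl
        rwa [hC.closure_eq] at this
      refine ⟨⟨x, hxE⟩, ?_, rfl⟩
      rw [← hCA]
      exact hxC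
  have hcoe : ∀ A : {A : Set E // IsClosed A},
      ((closureMap E A : Set X)) = closure (Subtype.val '' (A : Set E)) := fun _ => rfl
  -- injectivity
  have hinj : Function.Injective (closureMap E) := by
    intro A B hAB
    have hcl : closure (Subtype.val '' (A : Set E)) = closure (Subtype.val '' (B : Set E)) :=
      congrArg Subtype.val hAB
    have h1 : Subtype.val '' (A : Set E) = Subtype.val '' (B : Set E) := by
      rw [hval A, hval B, hcl]
    exact Subtype.ext ((Set.image_injective.2 Subtype.val_injective) h1)
  -- hitting an open set
  have hhit : ∀ (A : {A : Set E // IsClosed A}) (U : Set X), IsOpen U →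
      ((((closureMap E A : Set X)) ∩ U).Nonempty ↔
        ((A : Set E) ∩ (Subtype.val ⁻¹' U)).Nonempty) := by
    intro A U hU
    rw [hcoe, closure_inter_open_nonempty hU]
    constructor
    · rintro ⟨x, ⟨y, hyA, rfl⟩, hxU⟩
      exact ⟨y, hyA, hxU⟩
    · rintro ⟨y, hyA, hyU⟩
      exact ⟨y, ⟨y, hyA, rfl⟩, hyU⟩
  have hgen : ∀ V : Set E, IsOpen V → MeasurableSet[effrosSigma E]
      {A : {A : Set E // IsClosed A} | ((A : Set E) ∩ V).Nonempty} := fun V hV =>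
    MeasurableSpace.measurableSet_generateFrom ⟨V, hV, rfl⟩
  -- measurability
  have hmeas : @Measurable _ _ (effrosSigma E) (@borel _ (vietoris X)) (closureMap E) := by
    haveI := vietoris_secondCountable X
    rw [show (@borel _ (vietoris X)) = MeasurableSpace.generateFrom
        ({𝓤 | ∃ U : Set X, IsOpen U ∧ 𝓤 = {A : {A : Set X // IsClosed A} | (A : Set X) ⊆ U}} ∪
         {𝓤 | ∃ U : Set X, IsOpen U ∧
            𝓤 = {A : {A : Set X // IsClosed A} | ((A : Set X) ∩ U).Nonempty}}) from
      @borel_eq_generateFrom_of_subbasis _ _ (vietoris X) (vietoris_secondCountable X) rfl]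
    refine @measurable_generateFrom _ _ (effrosSigma E) _ _ ?_
    rintro s (⟨U, hU, rfl⟩ | ⟨U, hU, rfl⟩)
    · -- miss-type set
      have heq : closureMap E ⁻¹' {K : {A : Set X // IsClosed A} | (K : Set X) ⊆ U} =
          ⋃ n : ℕ, {A : {A : Set E // IsClosed A} |
            ((A : Set E) ∩
              (Subtype.val ⁻¹' (Metric.thickening (1 / ((n : ℝ) + 1)) Uᶜ))).Nonempty}ᶜ := by
        ext A
        simp only [mem_preimage, mem_iUnion, mem_compl_iff, mem_setOf_eq]
        constructor
        · intro hsub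
          have hcpt : IsCompact (closure (Subtype.val '' (A : Set E))) :=
            isClosed_closure.isCompact
          obtain ⟨δ, hδ, hth⟩ := hcpt.exists_thickening_subset_open hU hsub
          obtain ⟨n, hn⟩ := exists_nat_one_div_lt hδ
          refine ⟨n, ?_⟩
          rintro ⟨y, hyA, hyth⟩
          obtain ⟨z, hzU, hdz⟩ := Metric.mem_thickening_iff.1 hyth
          have hzth : z ∈ Metric.thickening δ (closure (Subtype.val '' (A : Set E))) := by
            rw [Metric.mem_thickening_iff]
            refine ⟨y, subset_closure (mem_image_of_mem _ hyA), ?_⟩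
            rw [dist_comm]
            linarith
          exact hzU (hth hzth)
        · rintro ⟨n, hn⟩
          intro x hx
          by_contra hxU
          have hpos : (0 : ℝ) < 1 / ((n : ℝ) + 1) := by positivity
          obtain ⟨y, hyb, hyS⟩ := _root_.mem_closure_iff.1 hx _ Metric.isOpen_ball
            (Metric.mem_ball_self hpos)
          rcases hyS with ⟨w, hwA, rfl⟩
          apply hn
          refine ⟨w, hwA, ?_⟩
          rw [mem_preimage, Metric.mem_thickening_iff]
          exact ⟨x, hxU, Metric.mem_ball.1 hyb⟩
      rw [heq]
      exact MeasurableSet.iUnion fun n =>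
        (hgen _ (Metric.isOpen_thickening.preimage continuous_subtype_val)).compl
    · -- hit-type set
      have heq : closureMap E ⁻¹'
          {K : {A : Set X // IsClosed A} | ((K : Set X) ∩ U).Nonempty} =
          {A : {A : Set E // IsClosed A} |
            ((A : Set E) ∩ (Subtype.val ⁻¹' U)).Nonempty} := by
        ext A
        exact hhit A U hU
      rw [heq]
      exact hgen _ (hU.preimage continuous_subtype_val)
  -- topological instances on the hyperspace
  letI tFX : TopologicalSpace {A : Set X // IsClosed A} := vietoris X
  haveI hT2 : T2Space {A : Set X // IsClosed A} := vietoris_t2 X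
  haveI hPol : PolishSpace {A : Set X // IsClosed A} := vietoris_polishSpace X
  haveI hPolX : PolishSpace X := inferInstance
  letI mXb : MeasurableSpace X := borel X
  haveI : BorelSpace X := ⟨rfl⟩
  letI mFX : MeasurableSpace {A : Set X // IsClosed A} := borel _
  haveI : BorelSpace {A : Set X // IsClosed A} := ⟨rfl⟩
  -- range characterization
  have hrange_char : range (closureMap E) =
      {K : {A : Set X // IsClosed A} | (K : Set X) ⊆ closure ((K : Set X) ∩ E)} := by
    ext K
    constructor
    · rintro ⟨A, rfl⟩
      show (closureMap E A : Set X) ⊆ closure ((closureMap E A : Set X) ∩ E)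
      rw [hcoe, ← hval A]
    · intro hK
      refine ⟨⟨Subtype.val ⁻¹' (K : Set X), K.2.preimage continuous_subtype_val⟩, ?_⟩
      apply Subtype.ext
      rw [hcoe]
      show closure (Subtype.val '' (Subtype.val ⁻¹' (K : Set X))) = (K : Set X)
      rw [Subtype.image_preimage_coe]
      apply Subset.antisymm
      · exact K.2.closure_subset_iff.2 inter_subset_right
      · intro x hx
        have := hK hx
        rwa [inter_comm (K : Set X) E] at this
  -- a countable family of basic open sets
  set b : Set (Set X) := insert ∅ (TopologicalSpace.countableBasis X) with hbdef
  have hbc : b.Countable := (countable_countableBasis X).insert ∅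
  obtain ⟨Bseq, hBseq⟩ := Set.Countable.exists_eq_range hbc ⟨∅, mem_insert _ _⟩
  have hBopen : ∀ n, IsOpen (Bseq n) := by
    intro n
    have : Bseq n ∈ b := hBseq ▸ mem_range_self n
    rcases this with h | h
    · rw [h]; exact isOpen_empty
    · exact isOpen_of_mem_countableBasis h
  -- range is analytic
  have hrange_eq : range (closureMap E) =
      ⋂ n : ℕ, ((hitSet (Bseq n))ᶜ ∪ hitSet (Bseq n ∩ E)) := by
    rw [hrange_char]
    ext K
    simp only [mem_iInter, mem_setOf_eq, mem_union, mem_compl_iff, hitSet]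
    constructor
    · intro hK n
      by_cases hne : ((K : Set X) ∩ Bseq n).Nonempty
      · right
        obtain ⟨x, hxK, hxB⟩ := hne
        obtain ⟨y, hyB, hyK, hyE⟩ := _root_.mem_closure_iff.1 (hK hxK) _ (hBopen n) hxB
        exact ⟨y, hyK, hyB, hyE⟩
      · left; exact hne
    · intro h x hxK
      rw [_root_.mem_closure_iff]
      intro o ho hxo
      obtain ⟨V, hVb, hxV, hVo⟩ :=
        (isBasis_countableBasis X).exists_subset_of_mem_open hxo ho
      have hVb' : V ∈ b := mem_insert_of_mem _ hVb
      rw [hBseq] at hVb'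
      obtain ⟨n, rfl⟩ := hVb'
      rcases h n with hmiss | hhit'
      · exact absurd ⟨x, hxK, hxV⟩ hmiss
      · obtain ⟨y, hyK, hyB, hyE⟩ := hhit'
        exact ⟨y, hVo hyB, hyK, hyE⟩
  have hrange_analytic : AnalyticSet (range (closureMap E)) := by
    rw [hrange_eq]
    refine AnalyticSet.iInter fun n => AnalyticSet.union' ?_ ?_
    · exact ((isOpen_hitSet (hBopen n)).isClosed_compl).analyticSet
    · exact analyticSet_hitSet X (((hBopen n).measurableSet.analyticSet).inter' hE)
  -- images of measurable sets
  have himage : ∀ M : Set {A : Set E // IsClosed A}, MeasurableSet[effrosSigma E] M →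
      AnalyticSet (closureMap E '' M) ∧ AnalyticSet (closureMap E '' Mᶜ) := by
    intro M hM
    refine MeasurableSpace.generateFrom_induction
      {𝓤 : Set {A : Set E // IsClosed A} | ∃ U : Set E, IsOpen U ∧
        𝓤 = {A : {A : Set E // IsClosed A} | ((A : Set E) ∩ U).Nonempty}}
      (fun s _ => AnalyticSet (closureMap E '' s) ∧ AnalyticSet (closureMap E '' sᶜ))
      ?_ ?_ ?_ ?_ M hM
    · -- generators
      rintro t ⟨U, hUopen, rfl⟩ -
      obtain ⟨U', hU', rfl⟩ := isOpen_induced_iff.1 hUopen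
      have himg1 : closureMap E ''
            {A : {A : Set E // IsClosed A} | ((A : Set E) ∩ (Subtype.val ⁻¹' U')).Nonempty} =
          range (closureMap E) ∩ hitSet U' := by
        ext K
        constructor
        · rintro ⟨A, hA, rfl⟩
          exact ⟨mem_range_self A, (hhit A U' hU').2 hA⟩
        · rintro ⟨⟨A, rfl⟩, hK⟩
          exact ⟨A, (hhit A U' hU').1 hK, rfl⟩
      have himg2 : closureMap E ''
            {A : {A : Set E // IsClosed A} | ((A : Set E) ∩ (Subtype.val ⁻¹' U')).Nonempty}ᶜ =
          range (closureMap E) ∩ (hitSet U')ᶜ := by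
        ext K
        constructor
        · rintro ⟨A, hA, rfl⟩
          exact ⟨mem_range_self A, fun h => hA ((hhit A U' hU').1 h)⟩
        · rintro ⟨⟨A, rfl⟩, hK⟩
          exact ⟨A, fun h => hK ((hhit A U' hU').2 h), rfl⟩
      constructor
      · rw [himg1]
        exact hrange_analytic.inter' ((isOpen_hitSet hU').measurableSet.analyticSet)
      · rw [himg2]
        exact hrange_analytic.inter' ((isOpen_hitSet hU').isClosed_compl.analyticSet)
    · -- empty set
      constructor
      · rw [image_empty]; exact analyticSet_empty
      · rw [compl_empty, image_univ]; exact hrange_analytic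
    · -- complements
      rintro t - ⟨h1, h2⟩
      exact ⟨h2, by rwa [compl_compl]⟩
    · -- countable unions
      intro f hfm hf
      constructor
      · rw [image_iUnion]
        exact AnalyticSet.iUnion fun n => (hf n).1
      · rw [compl_iUnion, image_iInter_of_injective hinj]
        exact AnalyticSet.iInter fun n => (hf n).2
  -- Souslin sets
  have hsouslin : ∀ 𝓐 : Set {A : Set E // IsClosed A}, IsSouslinIn (effrosSigma E) 𝓐 →
      AnalyticSet (closureMap E '' 𝓐) := by
    rintro 𝓐 ⟨f, hfmeas, rfl⟩
    have : closureMap E '' (⋃ σ : ℕ → ℕ, ⋂ n : ℕ, f (List.ofFn fun i : Fin n => σ i)) =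
        ⋃ σ : ℕ → ℕ, ⋂ n : ℕ, closureMap E '' f (List.ofFn fun i : Fin n => σ i) := by
      rw [image_iUnion]
      exact iUnion_congr fun σ => image_iInter_of_injective hinj _
    rw [this]
    exact analyticSet_souslin fun s => (himage (f s) (hfmeas s)).1
  exact ⟨hinj, hmeas, hrange_analytic, hsouslin⟩
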